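/- Let n ∈ ℕ and let x ∈ ℝ with x > 0, x not an integer, and ⌊x⌋ + n even. With α = x − ⌊x⌋, one has (1/(1+α))·D_n(⌊x⌋) + (α/(1+α))·D_n(x+1) − (1/2)·D_n(x−1) − (1/2)·D_n(x+1) ≥ 0. -/

import Mathlib

open Classical in
/-- The recursively defined functions `D n : ℝ → ℝ`. -/
noncomputable def D : ℕ → ℝ → ℝ
  | 0, x => if x ≤ 0 then 1 else 0
  | n + 1, x =>
    if x ≤ 0 then 1
    else if ((n : ℝ) + 1) < x then 0
    else if ∃ m : ℤ, x = (m : ℝ) then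
      (1 / 2) * D n (x - 1) + (1 / 2) * D n (x + 1)
    else if Odd n ∧ x < 1 then
      (1 - x) * D n 0 + x * D n 1
    else if Even (⌊x⌋ + (n : ℤ)) then
      (1 / (1 + Int.fract x)) * D n (⌊x⌋ : ℝ)
        + (Int.fract x / (1 + Int.fract x)) * D n (x + 1)
    else
      ((1 - Int.fract x) / (2 - Int.fract x)) * D n (x - 1)
        + (1 / (2 - Int.fract x)) * D n (⌈x⌉ : ℝ)

lemma D_of_nonpos (n : ℕ) (x : ℝ) (hx : x ≤ 0) : D n x = 1 := by
  cases n <;> simp [D, hx]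

lemma D_zero_of_gt (n : ℕ) (x : ℝ) (hx : (n : ℝ) < x) : D n x = 0 := by
  cases n with
  | zero => simpa [D] using not_le.2 (by exact_mod_cast hx)
  | succ m =>
    have h0 : ¬ x ≤ 0 := by
      push_neg
      calc (0:ℝ) ≤ (m : ℝ) + 1 := by positivity
        _ < x := by exact_mod_cast hx
    have h1 : ((m : ℝ) + 1) < x := by exact_mod_cast hx
    simp [D, h0, h1]

lemma fract_pos_of_not_int (x : ℝ) (h : ¬∃ m : ℤ, x = (m : ℝ)) : 0 < Int.fract x := by
  rcases lt_or_eq_of_le (Int.fract_nonneg x) with h' | h'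
  · exact h'
  · refine absurd ⟨⌊x⌋, ?_⟩ h
    have hfr : Int.fract x = x - ⌊x⌋ := rfl
    linarith [h'.symm ▸ hfr]

lemma D_bounds (n : ℕ) (x : ℝ) : 0 ≤ D n x ∧ D n x ≤ 1 := by
  induction n generalizing x with
  | zero => by_cases h : x ≤ 0 <;> simp [D, h]
  | succ m ih =>
    by_cases h0 : x ≤ 0
    · simp [D_of_nonpos _ _ h0]
    by_cases h1 : ((m : ℝ) + 1) < x
    · rw [D_zero_of_gt _ _ (by push_cast; linarith)]; norm_num
    have hx0 : 0 < x := not_le.1 h0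
    by_cases h2 : ∃ k : ℤ, x = (k : ℝ)
    · have e : D (m+1) x = (1/2) * D m (x-1) + (1/2) * D m (x+1) := by
        simp only [D]; rw [if_neg h0, if_neg h1, if_pos h2]
      obtain ⟨a1, a2⟩ := ih (x-1); obtain ⟨b1, b2⟩ := ih (x+1)
      constructor <;> [nlinarith; nlinarith]
    by_cases h3 : Odd m ∧ x < 1
    · have e : D (m+1) x = (1-x) * D m 0 + x * D m 1 := by
        simp only [D]; rw [if_neg h0, if_neg h1, if_neg h2, if_pos h3]
      obtain ⟨a1, a2⟩ := ih 0; obtain ⟨b1, b2⟩ := ih 1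
      have := h3.2
      constructor <;> [nlinarith; nlinarith]
    have hf0 : 0 < Int.fract x := by
      rcases lt_or_eq_of_le (Int.fract_nonneg x) with h | h
      · exact h
      · refine absurd ⟨⌊x⌋, ?_⟩ h2
        have hfr : Int.fract x = x - ⌊x⌋ := rfl
        linarith [h.symm ▸ hfr]
    have hf1 : Int.fract x < 1 := Int.fract_lt_one x
    by_cases h4 : Even (⌊x⌋ + (m : ℤ))
    · have e : D (m+1) x = (1 / (1 + Int.fract x)) * D m (⌊x⌋ : ℝ)
          + (Int.fract x / (1 + Int.fract x)) * D m (x + 1) := by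
        simp only [D]; rw [if_neg h0, if_neg h1, if_neg h2, if_neg h3, if_pos h4]
      obtain ⟨a1, a2⟩ := ih (⌊x⌋ : ℝ); obtain ⟨b1, b2⟩ := ih (x+1)
      have hd : (0:ℝ) < 1 + Int.fract x := by linarith
      have hsum : 1 / (1 + Int.fract x) + Int.fract x / (1 + Int.fract x) = 1 := by
        field_simp
      have c1 : 0 ≤ 1 / (1 + Int.fract x) := by positivity
      have c2 : 0 ≤ Int.fract x / (1 + Int.fract x) := by positivity
      constructor
      · rw [e]; exact add_nonneg (mul_nonneg c1 a1) (mul_nonneg c2 b1)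
      · rw [e]
        calc 1 / (1 + Int.fract x) * D m ⌊x⌋ + Int.fract x / (1 + Int.fract x) * D m (x+1)
            ≤ 1 / (1 + Int.fract x) * 1 + Int.fract x / (1 + Int.fract x) * 1 := by
              gcongr <;> assumption
          _ = 1 := by rw [mul_one, mul_one, hsum]
    · have e : D (m+1) x = ((1 - Int.fract x) / (2 - Int.fract x)) * D m (x - 1)
          + (1 / (2 - Int.fract x)) * D m (⌈x⌉ : ℝ) := by
        simp only [D]; rw [if_neg h0, if_neg h1, if_neg h2, if_neg h3, if_neg h4]
      obtain ⟨a1, a2⟩ := ih (x-1); obtain ⟨b1, b2⟩ := ih (⌈x⌉ : ℝ)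
      have hd : (0:ℝ) < 2 - Int.fract x := by linarith
      have hsum : (1 - Int.fract x) / (2 - Int.fract x) + 1 / (2 - Int.fract x) = 1 := by
        field_simp; ring
      have c1 : 0 ≤ (1 - Int.fract x) / (2 - Int.fract x) := by
        apply div_nonneg <;> linarith
      have c2 : 0 ≤ 1 / (2 - Int.fract x) := by positivity
      constructor
      · rw [e]; exact add_nonneg (mul_nonneg c1 a1) (mul_nonneg c2 b1)
      · rw [e]
        calc (1 - Int.fract x) / (2 - Int.fract x) * D m (x-1) + 1 / (2 - Int.fract x) * D m (⌈x⌉:ℝ)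
            ≤ (1 - Int.fract x) / (2 - Int.fract x) * 1 + 1 / (2 - Int.fract x) * 1 := by
              gcongr <;> assumption
          _ = 1 := by rw [mul_one, mul_one, hsum]

lemma arith_key (a u v p q : ℝ) (ha : 0 < a)
    (h : (1 + a) / 2 * p + (1 - a) / 2 * q ≤ v) :
    (1 + a) / 2 * (1 / (1 + a) * u + a / (1 + a) * p)
      + (1 - a) / 2 * (1 / (1 + a) * v + a / (1 + a) * q)
      ≤ 1 / 2 * u + 1 / 2 * v := by
  have h1 : (0 : ℝ) < 1 + a := by linarith
  have key : (1 / 2 * u + 1 / 2 * v)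
      - ((1 + a) / 2 * (1 / (1 + a) * u + a / (1 + a) * p)
        + (1 - a) / 2 * (1 / (1 + a) * v + a / (1 + a) * q))
      = a / (1 + a) * (v - ((1 + a) / 2 * p + (1 - a) / 2 * q)) := by
    field_simp; ring
  have h2 : 0 ≤ a / (1 + a) * (v - ((1 + a) / 2 * p + (1 - a) / 2 * q)) :=
    mul_nonneg (by positivity) (by linarith)
  linarith

lemma D_key : ∀ (n : ℕ) (x : ℝ), 0 < x → (¬∃ m : ℤ, x = (m : ℝ)) →
    Even (⌊x⌋ + (n : ℤ)) →
    (1 + Int.fract x) / 2 * D n (x - 1) + (1 - Int.fract x) / 2 * D n (x + 1)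
      ≤ D n (⌊x⌋ : ℝ) := by
  intro n
  induction n with
  | zero =>
    intro x hx0 hint heven
    have ha1 : Int.fract x < 1 := Int.fract_lt_one x
    have ha0 : 0 < Int.fract x := fract_pos_of_not_int x hint
    by_cases hx1 : x < 1
    · have hk : ⌊x⌋ = 0 := Int.floor_eq_zero_iff.2 ⟨hx0.le, hx1⟩
      rw [hk, D_of_nonpos 0 (((0:ℤ)):ℝ) (by norm_num), D_of_nonpos 0 (x - 1) (by linarith),
        D_zero_of_gt 0 (x + 1) (by norm_num; linarith)]
      linarith
    · push_neg at hx1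
      have hx1' : 1 < x := lt_of_le_of_ne hx1 (fun h => hint ⟨1, by exact_mod_cast h.symm⟩)
      have hk : 1 ≤ ⌊x⌋ := by exact_mod_cast Int.le_floor.2 (by exact_mod_cast hx1)
      rw [D_zero_of_gt 0 (x - 1) (by norm_num; linarith),
        D_zero_of_gt 0 (x + 1) (by norm_num; linarith),
        D_zero_of_gt 0 (⌊x⌋ : ℝ) (by norm_num; exact_mod_cast hk)]
      linarith
  | succ m ih =>
    intro x hx0 hint heven
    set a := Int.fract x with ha
    have ha1 : a < 1 := Int.fract_lt_one x
    have ha0 : 0 < a := fract_pos_of_not_int x hint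
    have h1a : (0:ℝ) < 1 + a := by linarith
    set k := ⌊x⌋ with hkdef
    have hk0 : 0 ≤ k := Int.floor_nonneg.2 hx0.le
    have hkx : (k : ℝ) < x := lt_of_le_of_ne (Int.floor_le x) (fun h => hint ⟨k, h.symm⟩)
    have hxk1 : x < (k : ℝ) + 1 := Int.lt_floor_add_one x
    obtain ⟨t, ht⟩ := heven
    have hpar : ¬ Even (k + (m : ℤ)) := by
      intro ⟨s, hs⟩; omega
    -- floor/fract of shifted points
    have hfm : Int.fract (x - 1) = a := by
      rw [show x - 1 = x - ((1:ℤ):ℝ) by push_cast; ring, Int.fract_sub_intCast]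
    have hfp : Int.fract (x + 1) = a := by
      rw [show x + 1 = x + ((1:ℤ):ℝ) by push_cast; ring, Int.fract_add_intCast]
    have hflm : ⌊x - 1⌋ = k - 1 := by
      rw [show x - 1 = x - ((1:ℤ):ℝ) by push_cast; ring, Int.floor_sub_intCast]
    have hflp : ⌊x + 1⌋ = k + 1 := by
      rw [show x + 1 = x + ((1:ℤ):ℝ) by push_cast; ring, Int.floor_add_intCast]
    have hintm : ¬∃ j : ℤ, x - 1 = (j : ℝ) := by
      rintro ⟨j, hj⟩; exact hint ⟨j + 1, by push_cast; linarith⟩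
    have hintp : ¬∃ j : ℤ, x + 1 = (j : ℝ) := by
      rintro ⟨j, hj⟩; exact hint ⟨j - 1, by push_cast; linarith⟩
    rcases eq_or_lt_of_le hk0 with hk | hk1
    · -- k = 0 : x < 1
      have hx1 : x < 1 := by rw [← hk] at hxk1; simpa using hxk1
      rw [← hk]
      rw [D_of_nonpos (m+1) (((0:ℤ)):ℝ) (by norm_num), D_of_nonpos (m+1) (x-1) (by linarith)]
      have hb := (D_bounds (m+1) (x+1)).2
      nlinarith
    · -- 1 ≤ k
      have hk1' : (1:ℝ) ≤ (k:ℝ) := by exact_mod_cast hk1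
      have hx1 : 1 < x := lt_of_le_of_lt hk1' hkx
      rcases lt_trichotomy k m with hkm | hkm | hkm
      · -- generic case : 1 ≤ k < m
        have hkmR : (k : ℝ) ≤ (m : ℝ) - 1 := by
          have : k ≤ (m:ℤ) - 1 := by omega
          exact_mod_cast this
        have eA : D (m+1) (k : ℝ)
            = 1/2 * D m ((k:ℝ) - 1) + 1/2 * D m ((k:ℝ) + 1) := by
          simp only [D]
          rw [if_neg (by push_neg; linarith), if_neg (by push_neg; linarith),
            if_pos ⟨k, rfl⟩]
        have eB : D (m+1) (x - 1)
            = 1/(1+a) * D m ((k:ℝ) - 1) + a/(1+a) * D m x := by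
          simp only [D]
          rw [if_neg (by push_neg; linarith), if_neg (by push_neg; linarith),
            if_neg hintm,
            if_neg (by
              rintro ⟨hm, hlt⟩
              have hke : k = 1 := by
                have : (k:ℝ) < 2 := by linarith
                have h2 : k < 2 := by exact_mod_cast this
                omega
              obtain ⟨s, hs⟩ := hm
              exact hpar ⟨(s : ℤ) + 1, by omega⟩),
            if_pos (by rw [hflm]; exact ⟨t - 1, by omega⟩),
            hfm, hflm]
          push_cast
          ring_nf
        have eC : D (m+1) (x + 1)
            = 1/(1+a) * D m ((k:ℝ) + 1) + a/(1+a) * D m (x + 2) := by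
          simp only [D]
          rw [if_neg (by push_neg; linarith), if_neg (by push_neg; linarith),
            if_neg hintp,
            if_neg (by rintro ⟨_, hlt⟩; linarith),
            if_pos (by rw [hflp]; exact ⟨t, by omega⟩),
            hfp, hflp]
          push_cast
          ring_nf
        have ihx : (1 + a)/2 * D m x + (1 - a)/2 * D m (x + 2) ≤ D m ((k:ℝ) + 1) := by
          have := ih (x + 1) (by linarith) hintp (by rw [hflp]; exact ⟨t, by omega⟩)
          rw [hfp, hflp] at this
          push_cast at this
          convert this using 2 <;> ring
        rw [eA, eB, eC]
        exact arith_key a _ _ _ _ ha0 ihx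
      · -- k = m : impossible by parity
        exact absurd ⟨t, by omega⟩ hpar
      · -- k > m
        rcases eq_or_lt_of_le (by omega : m + 1 ≤ k) with hke | hke
        · -- k = m + 1
          have hkeR : (k : ℝ) = (m : ℝ) + 1 := by exact_mod_cast hke.symm
          have eA : D (m+1) (k : ℝ)
              = 1/2 * D m ((k:ℝ) - 1) + 1/2 * D m ((k:ℝ) + 1) := by
            simp only [D]
            rw [if_neg (by push_neg; linarith), if_neg (by push_neg; linarith),
              if_pos ⟨k, rfl⟩]
          have eB : D (m+1) (x - 1)
              = 1/(1+a) * D m ((k:ℝ) - 1) + a/(1+a) * D m x := by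
            simp only [D]
            rw [if_neg (by push_neg; linarith), if_neg (by push_neg; linarith),
              if_neg hintm,
              if_neg (by
                rintro ⟨hm, hlt⟩
                have hm1 : 1 ≤ m := Nat.one_le_iff_ne_zero.2 (by rintro rfl; simp at hm)
                have : (1:ℝ) ≤ (m:ℝ) := by exact_mod_cast hm1
                linarith),
              if_pos (by rw [hflm]; exact ⟨t - 1, by omega⟩),
              hfm, hflm]
            push_cast
            ring_nf
          have eDx : D m x = 0 := D_zero_of_gt m x (by linarith)
          have eDk1 : D m ((k:ℝ) + 1) = 0 := D_zero_of_gt m _ (by linarith)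
          have eC : D (m+1) (x + 1) = 0 := D_zero_of_gt (m+1) _ (by push_cast; linarith)
          rw [eA, eB, eC, eDx, eDk1]
          have : (1 + a) / 2 * (1 / (1 + a) * D m ((k:ℝ) - 1) + a / (1 + a) * 0)
              = 1/2 * D m ((k:ℝ) - 1) := by field_simp; ring
          rw [this]
          linarith
        · -- k ≥ m + 2
          have hkeR : (m : ℝ) + 2 ≤ (k : ℝ) := by exact_mod_cast hke
          rw [D_zero_of_gt (m+1) (x-1) (by push_cast; linarith),
            D_zero_of_gt (m+1) (x+1) (by push_cast; linarith),
            D_zero_of_gt (m+1) (k:ℝ) (by push_cast; linarith)]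
          simp

/-- part (b) of Lemma 3.3. -/
theorem D_ineq_b (n : ℕ) (x : ℝ) (hx0 : 0 < x) (hint : ¬∃ m : ℤ, x = (m : ℝ))
    (heven : Even (⌊x⌋ + (n : ℤ))) :
    (1 / (1 + Int.fract x)) * D n (⌊x⌋ : ℝ) + (Int.fract x / (1 + Int.fract x)) * D n (x + 1)
      - (1 / 2) * D n (x - 1) - (1 / 2) * D n (x + 1) ≥ 0 := by
  have key := D_key n x hx0 hint heven
  set a := Int.fract x with ha
  have ha1 : a < 1 := Int.fract_lt_one x
  have ha0 : 0 < a := fract_pos_of_not_int x hint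
  have h1a : (0:ℝ) < 1 + a := by linarith
  have e : (1 / (1 + a)) * D n (⌊x⌋ : ℝ) + (a / (1 + a)) * D n (x + 1)
      - (1 / 2) * D n (x - 1) - (1 / 2) * D n (x + 1)
      = (1 / (1 + a)) * (D n (⌊x⌋ : ℝ)
        - ((1 + a) / 2 * D n (x - 1) + (1 - a) / 2 * D n (x + 1))) := by
    field_simp; ring
  rw [ge_iff_le, e]
  exact mul_nonneg (by positivity) (by linarith)
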